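/- There exist a graph G (the star K(1,4)), weight matrices P', P'' supported on G with P'·1 = P''·1 = 1, and second-order polynomials p₂', p₂'' with p₂'(1) = p₂''(1) = 1, such that the matrix (1/2)p₂'(P') + (1/2)p₂''(P'') cannot be written as p₂(P) for any symmetric P supported on G and second-order polynomial p₂ with p₂(1)=1. Hence the set {p₂(P) : P supported on G, p₂ degree-2, p₂(1)=1} is not convex. -/

import Mathlib

open Matrix

/-- The star graph `K(1,4)` on 5 nodes with center `0`. -/
def starGraph5 : SimpleGraph (Fin 5) where
  Adj i j := i ≠ j ∧ (i = 0 ∨ j = 0)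
  symm := ⟨by intro i j h; exact ⟨h.1.symm, h.2.symm⟩⟩
  loopless := ⟨by intro i h; exact h.1 rfl⟩

/-- `P` is supported on `G`: off-diagonal entries vanish outside the edges of `G`. -/
def SupportedOn (G : SimpleGraph (Fin 5)) (P : Matrix (Fin 5) (Fin 5) ℝ) : Prop :=
  ∀ i j : Fin 5, i ≠ j → ¬G.Adj i j → P i j = 0

/-- Weight matrix putting weight `1/2` on star edges `(0,1)` and `(0,2)`. -/
noncomputable def Pa : Matrix (Fin 5) (Fin 5) ℝ :=
  !![0, 1/2, 1/2, 0, 0;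
     1/2, 1/2, 0, 0, 0;
     1/2, 0, 1/2, 0, 0;
     0, 0, 0, 1, 0;
     0, 0, 0, 0, 1]

/-- Weight matrix putting weight `1/2` on star edges `(0,3)` and `(0,4)`. -/
noncomputable def Pb : Matrix (Fin 5) (Fin 5) ℝ :=
  !![0, 0, 0, 1/2, 1/2;
     0, 1, 0, 0, 0;
     0, 0, 1, 0, 0;
     1/2, 0, 0, 1/2, 0;
     1/2, 0, 0, 0, 1/2]

lemma Pa_symm : Pa.IsSymm := by
  unfold Matrix.IsSymm
  ext i j
  fin_cases i <;> fin_cases j <;> simp [Pa, vecHead, vecTail]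

lemma Pb_symm : Pb.IsSymm := by
  unfold Matrix.IsSymm
  ext i j
  fin_cases i <;> fin_cases j <;> simp [Pb, vecHead, vecTail]

lemma Pa_supp : SupportedOn starGraph5 Pa := by
  intro i j h1 h2
  fin_cases i <;> fin_cases j <;> simp_all [starGraph5, Pa, vecHead, vecTail]

lemma Pb_supp : SupportedOn starGraph5 Pb := by
  intro i j h1 h2
  fin_cases i <;> fin_cases j <;> simp_all [starGraph5, Pb, vecHead, vecTail]

lemma Pa_row : Pa *ᵥ 1 = 1 := by
  ext i
  fin_cases i <;> simp [Pa, Matrix.mulVec, dotProduct, Fin.sum_univ_five] <;> norm_num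

lemma Pb_row : Pb *ᵥ 1 = 1 := by
  ext i
  fin_cases i <;> simp [Pb, Matrix.mulVec, dotProduct, Fin.sum_univ_five] <;> norm_num

/-- Non-convexity: on the star `K(1,4)` there are weight matrices `P'`, `P''` and second-order
polynomials `p₂'`, `p₂''` with `p₂'(1) = p₂''(1) = 1` such that
`(1/2)p₂'(P') + (1/2)p₂''(P'')` is not of the form `p₂(P)` for any weight matrix `P`
supported on the star and second-order polynomial `p₂` with `p₂(1)=1`. -/
theorem p2_image_not_convex :
    ∃ (P' P'' : Matrix (Fin 5) (Fin 5) ℝ) (c₀' c₁' c₂' c₀'' c₁'' c₂'' : ℝ),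
      P'.IsSymm ∧ SupportedOn starGraph5 P' ∧ P' *ᵥ 1 = 1 ∧
      P''.IsSymm ∧ SupportedOn starGraph5 P'' ∧ P'' *ᵥ 1 = 1 ∧
      c₀' + c₁' + c₂' = 1 ∧ c₀'' + c₁'' + c₂'' = 1 ∧
      ∀ (P : Matrix (Fin 5) (Fin 5) ℝ) (c₀ c₁ c₂ : ℝ),
        P.IsSymm → SupportedOn starGraph5 P → P *ᵥ 1 = 1 → c₀ + c₁ + c₂ = 1 →
        c₀ • (1 : Matrix (Fin 5) (Fin 5) ℝ) + c₁ • P + c₂ • (P * P) ≠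
          (1 / 2 : ℝ) • (c₀' • (1 : Matrix (Fin 5) (Fin 5) ℝ) + c₁' • P' + c₂' • (P' * P')) +
          (1 / 2 : ℝ) • (c₀'' • (1 : Matrix (Fin 5) (Fin 5) ℝ) + c₁'' • P'' + c₂'' • (P'' * P'')) := by
  refine ⟨Pa, Pb, 0, 0, 1, 0, 0, 1, Pa_symm, Pa_supp, Pa_row, Pb_symm, Pb_supp, Pb_row,
    by ring, by ring, ?_⟩
  intro P c₀ c₁ c₂ hsym hsupp _ _ heq
  have hz : ∀ i j : Fin 5, i ≠ 0 → j ≠ 0 → i ≠ j → P i j = 0 := by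
    intro i j hi hj hij
    exact hsupp i j hij (by simp [starGraph5, hi, hj])
  have h12 := congrFun (congrFun heq 1) 2
  have h34 := congrFun (congrFun heq 3) 4
  have h13 := congrFun (congrFun heq 1) 3
  have e12 : P 1 2 = 0 := hz 1 2 (by decide) (by decide) (by decide)
  have e13 : P 1 3 = 0 := hz 1 3 (by decide) (by decide) (by decide)
  have e14 : P 1 4 = 0 := hz 1 4 (by decide) (by decide) (by decide)
  have e23 : P 2 3 = 0 := hz 2 3 (by decide) (by decide) (by decide)
  have e24 : P 2 4 = 0 := hz 2 4 (by decide) (by decide) (by decide)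
  have e34 : P 3 4 = 0 := hz 3 4 (by decide) (by decide) (by decide)
  have e32 : P 3 2 = 0 := hz 3 2 (by decide) (by decide) (by decide)
  have e42 : P 4 2 = 0 := hz 4 2 (by decide) (by decide) (by decide)
  have e43 : P 4 3 = 0 := hz 4 3 (by decide) (by decide) (by decide)
  have s1 : P 1 0 = P 0 1 := by rw [← hsym.apply]
  have s3 : P 3 0 = P 0 3 := by rw [← hsym.apply]
  simp [Matrix.add_apply, Matrix.smul_apply, Matrix.one_apply, Matrix.mul_apply,
    Fin.sum_univ_five, Pa, Pb, vecHead, vecTail, e12, e13, e14, e23, e24, e34,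
    e32, e42, e43, s1, s3] at h12 h34 h13
  rcases h13 with h | h | h <;> simp only [h] at h12 h34 <;> simp at h12 h34
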